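/- Every fractionally subadditive set function f : 2^[n] → ℝ₊ whose marginal values all lie in [0,1] is self-bounding. Concretely, identifying f with a function on {0,1}^n and setting f_i(x^(i)) = f(x_1,…,x_{i−1},0,x_{i+1},…,x_n), one has 0 ≤ f(x) − f_i(x^(i)) ≤ 1 for all x and i, and Σ_{i=1}^n (f(x) − f_i(x^(i))) ≤ f(x) for all x ∈ {0,1}^n. -/
import Mathlib


open Finset

/-- Every fractionally subadditive set function with marginal values in `[0,1]` is
self-bounding, with `f_i` obtained from `f` by setting the `i`-th coordinate to `0`
(i.e. removing `i` from the set): `0 ≤ f(A) − f(A \ {i}) ≤ 1` for all `A, i`, and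
`∑_{i=1}^n (f(A) − f(A \ {i})) ≤ f(A)`. -/
theorem fractionally_subadditive_self_bounding
    {n : ℕ} (f : Finset (Fin n) → ℝ)
    (hnonneg : ∀ A : Finset (Fin n), 0 ≤ f A)
    (hfs : ∀ (A : Finset (Fin n)) (m : ℕ) (B : Fin m → Finset (Fin n)) (β : Fin m → ℝ),
      (∀ i, 0 ≤ β i) →
      (∀ a ∈ A, 1 ≤ ∑ i ∈ univ.filter (fun i => a ∈ B i), β i) →
      f A ≤ ∑ i, β i * f (B i))
    (hmarg : ∀ (A : Finset (Fin n)) (j : Fin n),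
      0 ≤ f (insert j A) - f A ∧ f (insert j A) - f A ≤ 1) :
    (∀ (A : Finset (Fin n)) (i : Fin n),
        0 ≤ f A - f (A.erase i) ∧ f A - f (A.erase i) ≤ 1) ∧
    (∀ A : Finset (Fin n), ∑ i, (f A - f (A.erase i)) ≤ f A) := by
  constructor
  · intro A i
    by_cases h : i ∈ A
    · have := hmarg (A.erase i) i
      rwa [Finset.insert_erase h] at this
    · rw [Finset.erase_eq_of_notMem h]
      constructor <;> simp
  · intro A
    have key : ((A.card : ℝ) - 1) * f A ≤ ∑ i ∈ A, f (A.erase i) := by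
      rcases le_or_gt A.card 1 with hc | hc
      · have h1 : ((A.card : ℝ) - 1) ≤ 0 := by
          have : (A.card : ℝ) ≤ 1 := by exact_mod_cast hc
          linarith
        have h2 : ((A.card : ℝ) - 1) * f A ≤ 0 :=
          mul_nonpos_of_nonpos_of_nonneg h1 (hnonneg A)
        exact h2.trans (Finset.sum_nonneg fun i _ => hnonneg _)
      · set k : ℝ := (A.card : ℝ) with hk
        have hk1 : (1 : ℝ) < k := by rw [hk]; exact_mod_cast hc
        have hkpos : (0 : ℝ) < k - 1 := by linarith
        set β : Fin n → ℝ := fun i => if i ∈ A then (k - 1)⁻¹ else 0 with hβ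
        have hcov : ∀ a ∈ A, 1 ≤ ∑ i ∈ univ.filter (fun i => a ∈ A.erase i), β i := by
          intro a ha
          have hset : univ.filter (fun i => a ∈ A.erase i) = univ.filter (fun i => i ≠ a) := by
            ext i
            simp [Finset.mem_erase, ha, eq_comm]
          rw [hset]
          have hsum : ∑ i ∈ univ.filter (fun i => i ≠ a), β i
              = ∑ i ∈ A.erase a, (k - 1)⁻¹ := by
            rw [hβ, ← Finset.sum_filter, Finset.filter_filter]
            congr 1
            ext i
            simp [Finset.mem_erase, and_comm]
          rw [hsum, Finset.sum_const, Finset.card_erase_of_mem ha]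
          have : ((A.card - 1 : ℕ) : ℝ) = k - 1 := by
            have : 1 ≤ A.card := by omega
            push_cast [this]
            ring
          rw [nsmul_eq_mul, this, mul_inv_cancel₀ (by linarith)]
        have hmain := hfs A n (fun i => A.erase i) β (fun i => by
          by_cases h : i ∈ A <;> simp [hβ, h, le_of_lt (inv_pos.mpr hkpos)]) hcov
        have hrhs : ∑ i, β i * f (A.erase i) = (k - 1)⁻¹ * ∑ i ∈ A, f (A.erase i) := by
          rw [Finset.mul_sum]
          rw [show (∑ i, β i * f (A.erase i)) = ∑ i ∈ univ.filter (fun i => i ∈ A), (k-1)⁻¹ * f (A.erase i) from ?_]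
          · congr 1
            simp [Finset.filter_mem_eq_inter]
          · rw [Finset.sum_filter]
            apply Finset.sum_congr rfl
            intro i _
            by_cases h : i ∈ A <;> simp [hβ, h]
        rw [hrhs] at hmain
        have h2 : (k - 1) * ((k - 1)⁻¹ * ∑ i ∈ A, f (A.erase i))
            = ∑ i ∈ A, f (A.erase i) := by field_simp
        nlinarith [mul_le_mul_of_nonneg_left hmain hkpos.le]
    have hsplit : ∑ i, (f A - f (A.erase i)) = ∑ i ∈ A, (f A - f (A.erase i)) := by
      rw [← Finset.sum_filter_add_sum_filter_not univ (fun i => i ∈ A)]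
      have h1 : univ.filter (fun i => i ∈ A) = A := by
        simp [Finset.filter_mem_eq_inter]
      have h2 : ∑ i ∈ univ.filter (fun i => i ∉ A), (f A - f (A.erase i)) = 0 := by
        apply Finset.sum_eq_zero
        intro i hi
        simp only [Finset.mem_filter] at hi
        rw [Finset.erase_eq_of_notMem hi.2]
        ring
      rw [h1, h2, add_zero]
    rw [hsplit]
    have : ∑ i ∈ A, (f A - f (A.erase i)) = (A.card : ℝ) * f A - ∑ i ∈ A, f (A.erase i) := by
      rw [Finset.sum_sub_distrib, Finset.sum_const, nsmul_eq_mul]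
    rw [this]
    linarith [key]
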